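/- With the sets C_i ⊆ F₂ defined inductively from the generators a, b of the free group F₂ (C₀ = {a, b, a⁻¹, b⁻¹}, C_{i+1} = {[x,y] : x, y ∈ C_i, x ≠ y, x ≠ y⁻¹}): for every i ≥ 0, every element of C_i is a product of exactly 4^i elements of the set {a, b, a⁻¹, b⁻¹}, and the cardinality of C_i is at least 2^(2^i). -/

import Mathlib

/-- The first generator `a` of the free group on two generators. -/
def gena : FreeGroup Bool := FreeGroup.of true

/-- The second generator `b` of the free group on two generators. -/
def genb : FreeGroup Bool := FreeGroup.of false

/-- The sets `C i` of iterated commutators: `C 0 = {a, b, a⁻¹, b⁻¹}` and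
`C (i+1) = {[x,y] : x, y ∈ C i, x ≠ y, x ≠ y⁻¹}`. -/
def C : ℕ → Set (FreeGroup Bool)
  | 0 => {gena, genb, gena⁻¹, genb⁻¹}
  | (i + 1) => {w | ∃ x ∈ C i, ∃ y ∈ C i, x ≠ y ∧ x ≠ y⁻¹ ∧ w = x * y * x⁻¹ * y⁻¹}

section Helpers

variable {κ : Type} [DecidableEq κ]

lemma reduce_cons_of_ne {L L' : List (κ × Bool)} {y : κ × Bool} (x : κ × Bool)
    (h : FreeGroup.reduce L = y :: L') (hxy : ¬(x.1 = y.1 ∧ x.2 = !y.2)) :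
    FreeGroup.reduce (x :: L) = x :: y :: L' := by
  rw [FreeGroup.reduce.cons, h]
  exact if_neg hxy

lemma reduce_cons_cancel {L L' : List (κ × Bool)} {y : κ × Bool} (x : κ × Bool)
    (h : FreeGroup.reduce L = y :: L') (hxy : x.1 = y.1 ∧ x.2 = !y.2) :
    FreeGroup.reduce (x :: L) = L' := by
  rw [FreeGroup.reduce.cons, h]
  exact if_pos hxy

lemma reduce_cons_nil {L : List (κ × Bool)} (x : κ × Bool)
    (h : FreeGroup.reduce L = []) : FreeGroup.reduce (x :: L) = [x] := by
  rw [FreeGroup.reduce.cons, h]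

lemma key_reduce {p q : κ × Bool} (hpq : p.1 ≠ q.1)
    {W : List (κ × Bool)} (hW : FreeGroup.reduce W = W) (hY : W.take 2 ≠ [q, p]) :
    ∃ R, FreeGroup.reduce (p :: q :: (p.1, !p.2) :: (q.1, !q.2) :: W) = p :: q :: R := by
  have j2 : ¬(q.1 = (p.1, !p.2).1 ∧ q.2 = !(p.1, !p.2).2) := fun h => hpq h.1.symm
  have j3 : ¬(p.1 = q.1 ∧ p.2 = !q.2) := fun h => hpq h.1
  cases W with
  | nil =>
      refine ⟨[(p.1, !p.2), (q.1, !q.2)], ?_⟩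
      have h1 : FreeGroup.reduce [(q.1, !q.2)] = [(q.1, !q.2)] := rfl
      have h2 := reduce_cons_of_ne (p.1, !p.2) h1 (fun h => hpq h.1)
      have h3 := reduce_cons_of_ne q h2 j2
      exact reduce_cons_of_ne p h3 j3
  | cons c W' =>
      by_cases hc : c = q
      · have h1 : FreeGroup.reduce ((q.1, !q.2) :: c :: W') = W' :=
          reduce_cons_cancel (q.1, !q.2) hW ⟨by rw [hc], by rw [hc]⟩
        cases W' with
        | nil =>
            refine ⟨[(p.1, !p.2)], ?_⟩
            have h2 := reduce_cons_nil (p.1, !p.2) h1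
            have h3 := reduce_cons_of_ne q h2 j2
            exact reduce_cons_of_ne p h3 j3
        | cons d W'' =>
            have hd : d ≠ p := by
              intro h; apply hY; rw [hc] at *; simp [h]
            refine ⟨(p.1, !p.2) :: d :: W'', ?_⟩
            have h2 := reduce_cons_of_ne (p.1, !p.2) h1 (by
              rintro ⟨ha, hb⟩
              exact hd (Prod.ext ha.symm (by simpa using hb.symm)))
            have h3 := reduce_cons_of_ne q h2 j2
            exact reduce_cons_of_ne p h3 j3
      · refine ⟨(p.1, !p.2) :: (q.1, !q.2) :: c :: W', ?_⟩
        have h1 : FreeGroup.reduce ((q.1, !q.2) :: c :: W') = (q.1, !q.2) :: c :: W' := by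
          refine reduce_cons_of_ne (q.1, !q.2) hW ?_
          rintro ⟨ha, hb⟩
          exact hc (show c = q from Prod.ext ha.symm (by simpa using hb.symm))
        have h2 := reduce_cons_of_ne (p.1, !p.2) h1 (fun h => hpq h.1)
        have h3 := reduce_cons_of_ne q h2 j2
        exact reduce_cons_of_ne p h3 j3

/-- the commutator word on signed letters `p`, `q` -/
def cw (p q : κ × Bool) : FreeGroup κ := FreeGroup.mk [p, q, (p.1, !p.2), (q.1, !q.2)]

omit [DecidableEq κ] in
lemma cw_inv (p q : κ × Bool) : (cw p q)⁻¹ = cw q p := by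
  rw [cw, cw, FreeGroup.inv_mk]
  simp [FreeGroup.invRev]

lemma toWord_cw_mul {p q : κ × Bool} (hpq : p.1 ≠ q.1) (v : FreeGroup κ)
    (hv : v.toWord.take 2 ≠ [q, p]) :
    ∃ R, (cw p q * v).toWord = p :: q :: R := by
  have : cw p q * v = FreeGroup.mk ([p, q, (p.1, !p.2), (q.1, !q.2)] ++ v.toWord) := by
    rw [cw, ← FreeGroup.mul_mk, FreeGroup.mk_toWord]
  rw [this, FreeGroup.toWord_mk]
  exact key_reduce hpq (FreeGroup.reduce_toWord v) hv

lemma comm_free {ι : Type} [Nontrivial ι] (P Q : ι → κ × Bool)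
    (hb : ∀ x, (P x).1 ≠ (Q x).1)
    (hinj : ∀ x y, P x = P y → Q x = Q y → x = y)
    (hrev : ∀ x y, P x = Q y → Q x = P y → False) :
    Function.Injective (FreeGroup.lift fun x => cw (P x) (Q x)) := by
  apply FreeGroup.injective_lift_of_ping_pong (fun x => cw (P x) (Q x))
    (fun x => {w : FreeGroup κ | w.toWord.take 2 = [P x, Q x]})
    (fun x => {w : FreeGroup κ | w.toWord.take 2 = [Q x, P x]})
  · -- nonempty
    intro x
    refine ⟨cw (P x) (Q x), ?_⟩
    show (cw (P x) (Q x)).toWord.take 2 = _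
    rw [cw, FreeGroup.toWord_mk]
    have h1 : FreeGroup.reduce [((Q x).1, !(Q x).2)] = [((Q x).1, !(Q x).2)] := rfl
    have h2 := reduce_cons_of_ne (((P x).1, !(P x).2)) h1 (fun h => hb x h.1)
    have h3 := reduce_cons_of_ne (Q x) h2 (fun h => hb x h.1.symm)
    have h4 := reduce_cons_of_ne (P x) h3 (fun h => hb x h.1)
    rw [h4]
    rfl
  · -- X pairwise disjoint
    intro x y hxy
    rw [Function.onFun, Set.disjoint_left]
    intro w hwx hwy
    apply hxy
    simp only [Set.mem_setOf_eq] at hwx hwy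
    rw [hwx] at hwy
    exact hinj x y (by injection hwy) (by injection hwy with _ h; injection h)
  · -- Y pairwise disjoint
    intro x y hxy
    rw [Function.onFun, Set.disjoint_left]
    intro w hwx hwy
    apply hxy
    simp only [Set.mem_setOf_eq] at hwx hwy
    rw [hwx] at hwy
    have h1 : Q x = Q y := by injection hwy
    have h2 : P x = P y := by injection hwy with _ h; injection h
    exact hinj x y h2 h1
  · -- X vs Y disjoint
    intro x y
    rw [Set.disjoint_left]
    intro w hwx hwy
    simp only [Set.mem_setOf_eq] at hwx hwy
    rw [hwx] at hwy
    have h1 : P x = Q y := by injection hwy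
    have h2 : Q x = P y := by injection hwy with _ h; injection h
    exact hrev x y h1 h2
  · -- ping
    intro x w hw
    rw [Set.mem_smul_set] at hw
    obtain ⟨v, hv, rfl⟩ := hw
    simp only [Set.mem_compl_iff, Set.mem_setOf_eq] at hv ⊢
    rw [smul_eq_mul]
    obtain ⟨R, hR⟩ := toWord_cw_mul (hb x) v hv
    rw [hR]
    rfl
  · -- pong
    intro x w hw
    rw [Set.mem_smul_set] at hw
    obtain ⟨v, hv, rfl⟩ := hw
    simp only [Set.mem_compl_iff, Set.mem_setOf_eq] at hv ⊢
    rw [Pi.inv_apply, smul_eq_mul, cw_inv]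
    obtain ⟨R, hR⟩ := toWord_cw_mul (fun h => hb x h.symm) v hv
    rw [hR]
    rfl

lemma toWord_single (a : κ) (e : Bool) :
    (FreeGroup.mk [(a, e)] : FreeGroup κ).toWord = [(a, e)] := by
  rw [FreeGroup.toWord_mk]
  rfl

lemma mk_single_ne (a b : κ) (e f : Bool) (hab : a ≠ b) :
    (FreeGroup.mk [(a, e)] : FreeGroup κ) ≠ FreeGroup.mk [(b, f)] := by
  intro h
  have := congrArg FreeGroup.toWord h
  rw [toWord_single, toWord_single] at this
  exact hab (by injection this with h1; injection h1)

lemma inv_mk_single (a : κ) (e : Bool) :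
    (FreeGroup.mk [(a, e)] : FreeGroup κ)⁻¹ = FreeGroup.mk [(a, !e)] := by
  rw [FreeGroup.inv_mk]
  simp [FreeGroup.invRev]

lemma of_mul_of_ne_one (a b : κ) : (FreeGroup.of a * FreeGroup.of b : FreeGroup κ) ≠ 1 := by
  intro h
  have h2 : (FreeGroup.of a * FreeGroup.of b : FreeGroup κ).toWord = [(a, true), (b, true)] := by
    show (FreeGroup.mk [(a, true)] * FreeGroup.mk [(b, true)]).toWord = _
    rw [FreeGroup.mul_mk, FreeGroup.toWord_mk]
    exact reduce_cons_of_ne (a, true) rfl (by simp)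
  rw [h, FreeGroup.toWord_one] at h2
  cases h2

end Helpers

section Counting

lemma count_lemma {κ : Type} [Fintype κ] [DecidableEq κ] (t : κ → FreeGroup Bool)
    (hinj : Function.Injective (FreeGroup.lift t)) (S : Set (FreeGroup Bool))
    (hmem : ∀ j, t j ∈ S) (hmemi : ∀ j, (t j)⁻¹ ∈ S) (hfin : S.Finite) :
    2 * Fintype.card κ ≤ S.ncard := by
  classical
  have htinj : Function.Injective t := by
    intro a b h
    have h2 : FreeGroup.lift t (FreeGroup.of a) = FreeGroup.lift t (FreeGroup.of b) := by
      simpa using h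
    exact FreeGroup.of_injective (hinj h2)
  have hne : ∀ a b : κ, t a ≠ (t b)⁻¹ := by
    intro a b h
    have h2 : FreeGroup.lift t (FreeGroup.of a * FreeGroup.of b) = FreeGroup.lift t 1 := by
      simp only [map_mul, map_one, FreeGroup.lift_apply_of]
      rw [h]
      simp
    exact of_mul_of_ne_one a b (hinj h2)
  set T : Finset (FreeGroup Bool) :=
    Finset.image t Finset.univ ∪ Finset.image (fun x => (t x)⁻¹) Finset.univ with hT
  have hdisj : Disjoint (Finset.image t Finset.univ)
      (Finset.image (fun x => (t x)⁻¹) Finset.univ) := by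
    rw [Finset.disjoint_left]
    intro g hg1 hg2
    obtain ⟨a, _, rfl⟩ := Finset.mem_image.1 hg1
    obtain ⟨b, _, hb⟩ := Finset.mem_image.1 hg2
    exact hne a b hb.symm
  have hTcard : T.card = 2 * Fintype.card κ := by
    rw [hT, Finset.card_union_of_disjoint hdisj,
      Finset.card_image_of_injective _ htinj,
      Finset.card_image_of_injective _ (fun a b h => htinj (inv_injective h)),
      Finset.card_univ]
    ring
  have hsub : (↑T : Set (FreeGroup Bool)) ⊆ S := by
    intro g hg
    simp only [hT, Finset.coe_union, Set.mem_union, Finset.coe_image, Set.mem_image] at hg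
    rcases hg with ⟨a, _, rfl⟩ | ⟨a, _, rfl⟩
    · exact hmem a
    · exact hmemi a
  calc 2 * Fintype.card κ = (↑T : Set (FreeGroup Bool)).ncard := by
        rw [Set.ncard_coe_finset, hTcard]
    _ ≤ S.ncard := Set.ncard_le_ncard hsub hfin

lemma card_lt_pairs (n : ℕ) :
    2 * Fintype.card {pr : Fin n × Fin n // pr.1 < pr.2} = n * (n - 1) := by
  have E2 : {pr : Fin n × Fin n // pr.1 < pr.2} ≃ Σ j : Fin n, Fin j.1 :=
    { toFun := fun x => ⟨x.1.2, ⟨x.1.1.1, x.2⟩⟩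
      invFun := fun y => ⟨(⟨y.2.1, lt_trans y.2.2 y.1.2⟩, y.1), y.2.2⟩
      left_inv := by rintro ⟨⟨a, b⟩, h⟩; rfl
      right_inv := by rintro ⟨j, m⟩; rfl }
  rw [Fintype.card_congr E2, Fintype.card_sigma]
  simp only [Fintype.card_fin]
  rw [show (∑ x : Fin n, (x:ℕ)) = ∑ i ∈ Finset.range n, i from Fin.sum_univ_eq_sum_range (fun i => i) n]
  rw [mul_comm]
  exact Finset.sum_range_id_mul_two n

end Counting

section Invariant

/-- inductive invariant: `C i` contains `T ∪ T⁻¹` for a free family `T` of size `n`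
with `2^(2^i) + 2 ≤ 2n`. -/
def Invar (i : ℕ) : Prop :=
  ∃ (κ : Type) (_ : Fintype κ) (_ : DecidableEq κ) (t : κ → FreeGroup Bool),
    Function.Injective (FreeGroup.lift t) ∧ (∀ j, t j ∈ C i) ∧ (∀ j, (t j)⁻¹ ∈ C i) ∧
    2 ^ 2 ^ i + 2 ≤ 2 * Fintype.card κ

lemma invar_zero : Invar 0 := by
  refine ⟨Bool, inferInstance, inferInstance, fun b => FreeGroup.of b, ?_, ?_, ?_, ?_⟩
  · intro a b h
    rwa [FreeGroup.lift_of_apply, FreeGroup.lift_of_apply] at h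
  · intro j
    cases j
    · exact Or.inr (Or.inl rfl)
    · exact Or.inl rfl
  · intro j
    cases j
    · exact Or.inr (Or.inr (Or.inr rfl))
    · exact Or.inr (Or.inr (Or.inl rfl))
  · simp

lemma invar_succ (i : ℕ) (h : Invar i) : Invar (i + 1) := by
  classical
  obtain ⟨κ, _, _, t, hinj, hmem, hmemi, hcard⟩ := h
  set n := Fintype.card κ with hn
  have hm2 : (2 : ℕ) ≤ 2 ^ 2 ^ i := by
    calc (2 : ℕ) = 2 ^ 1 := by norm_num
    _ ≤ 2 ^ 2 ^ i := Nat.pow_le_pow_right (by norm_num) Nat.one_le_two_pow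
  have hn2 : 2 ≤ n := by omega
  set e := Fintype.equivFin κ with he
  let A := {pr : κ × κ // e pr.1 < e pr.2}
  let ι := A × Bool × Bool
  let P : ι → κ × Bool := fun x => (x.1.1.1, x.2.1)
  let Q : ι → κ × Bool := fun x => (x.1.1.2, x.2.2)
  have hA : Nonempty A := by
    refine ⟨⟨(e.symm ⟨0, by omega⟩, e.symm ⟨1, by omega⟩), ?_⟩⟩
    rw [Equiv.apply_symm_apply, Equiv.apply_symm_apply]
    exact Nat.zero_lt_one
  haveI : Nontrivial ι := by
    obtain ⟨a0⟩ := hA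
    refine ⟨(a0, true, true), (a0, true, false), fun h => ?_⟩
    have h2 := congrArg (fun z : ι => z.2.2) h
    simp at h2
  have hb : ∀ x : ι, (P x).1 ≠ (Q x).1 := by
    intro x hx
    have h2 := x.1.2
    rw [show x.1.1.1 = (P x).1 from rfl, hx] at h2
    exact lt_irrefl _ h2
  have hinj2 : ∀ x y : ι, P x = P y → Q x = Q y → x = y := by
    rintro ⟨⟨⟨j, k⟩, hjk⟩, ε, δ⟩ ⟨⟨⟨j', k'⟩, hjk'⟩, ε', δ'⟩ h1 h2
    simp only [P, Q, Prod.mk.injEq] at h1 h2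
    obtain ⟨rfl, rfl⟩ := h1
    obtain ⟨rfl, rfl⟩ := h2
    rfl
  have hrev : ∀ x y : ι, P x = Q y → Q x = P y → False := by
    rintro ⟨⟨⟨j, k⟩, hjk⟩, ε, δ⟩ ⟨⟨⟨j', k'⟩, hjk'⟩, ε', δ'⟩ h1 h2
    simp only [P, Q, Prod.mk.injEq] at h1 h2
    obtain ⟨rfl, -⟩ := h1
    obtain ⟨rfl, -⟩ := h2
    exact absurd (hjk.trans hjk') (lt_irrefl _)
  have hfree : Function.Injective (FreeGroup.lift fun x : ι => cw (P x) (Q x)) :=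
    comm_free P Q hb hinj2 hrev
  let t' : ι → FreeGroup Bool := fun x => FreeGroup.lift t (cw (P x) (Q x))
  have hlift : FreeGroup.lift t' =
      (FreeGroup.lift t).comp (FreeGroup.lift fun x : ι => cw (P x) (Q x)) := by
    apply FreeGroup.ext_hom
    intro x
    simp [t']
  have hinj' : Function.Injective (FreeGroup.lift t') := by
    rw [hlift, MonoidHom.coe_comp]
    exact hinj.comp hfree
  have hmain : ∀ x : ι, t' x ∈ C (i + 1) ∧ (t' x)⁻¹ ∈ C (i + 1) := by
    rintro ⟨⟨⟨j, k⟩, hjk⟩, ε, δ⟩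
    set x : ι := ⟨⟨⟨j, k⟩, hjk⟩, ε, δ⟩ with hx
    have hjkne : j ≠ k := by
      intro h2
      rw [h2] at hjk
      exact lt_irrefl _ hjk
    set p := FreeGroup.lift t (FreeGroup.mk [(j, ε)]) with hp'
    set q := FreeGroup.lift t (FreeGroup.mk [(k, δ)]) with hq'
    have hcw : cw (P x) (Q x) =
        FreeGroup.mk [(j, ε)] * FreeGroup.mk [(k, δ)] *
          (FreeGroup.mk [(j, ε)])⁻¹ * (FreeGroup.mk [(k, δ)])⁻¹ := by
      rw [inv_mk_single, inv_mk_single]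
      simp only [FreeGroup.mul_mk]
      rfl
    have ht' : t' x = p * q * p⁻¹ * q⁻¹ := by
      show FreeGroup.lift t (cw (P x) (Q x)) = _
      rw [hcw]
      simp only [map_mul, map_inv]
      rfl
    have hpmem : p ∈ C i := by
      cases ε
      · have h2 : (FreeGroup.mk [(j, false)] : FreeGroup κ) = (FreeGroup.of j)⁻¹ := by
          rw [show (FreeGroup.of j : FreeGroup κ) = FreeGroup.mk [(j, true)] from rfl,
            inv_mk_single]
          rfl
        rw [hp', h2, map_inv, FreeGroup.lift_apply_of]
        exact hmemi j
      · rw [hp', show (FreeGroup.mk [(j, true)] : FreeGroup κ) = FreeGroup.of j from rfl,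
          FreeGroup.lift_apply_of]
        exact hmem j
    have hqmem : q ∈ C i := by
      cases δ
      · have h2 : (FreeGroup.mk [(k, false)] : FreeGroup κ) = (FreeGroup.of k)⁻¹ := by
          rw [show (FreeGroup.of k : FreeGroup κ) = FreeGroup.mk [(k, true)] from rfl,
            inv_mk_single]
          rfl
        rw [hq', h2, map_inv, FreeGroup.lift_apply_of]
        exact hmemi k
      · rw [hq', show (FreeGroup.mk [(k, true)] : FreeGroup κ) = FreeGroup.of k from rfl,
          FreeGroup.lift_apply_of]
        exact hmem k
    have hpq : p ≠ q := by
      intro h2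
      exact mk_single_ne j k ε δ hjkne (hinj h2)
    have hpq' : p ≠ q⁻¹ := by
      intro h2
      rw [hq', ← map_inv, inv_mk_single] at h2
      exact mk_single_ne j k ε (!δ) hjkne (hinj h2)
    refine ⟨⟨p, hpmem, q, hqmem, hpq, hpq', ht'⟩, ?_⟩
    have hinvt : (t' x)⁻¹ = q * p * q⁻¹ * p⁻¹ := by
      rw [ht']
      group
    refine ⟨q, hqmem, p, hpmem, Ne.symm hpq, ?_, hinvt⟩
    intro h2
    exact hpq' (by rw [h2, inv_inv])

  refine ⟨ι, inferInstance, inferInstance, t', hinj',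
    fun x => (hmain x).1, fun x => (hmain x).2, ?_⟩
  have hE1 : Fintype.card A = Fintype.card {pr : Fin n × Fin n // pr.1 < pr.2} := by
    apply Fintype.card_congr
    exact Equiv.subtypeEquiv (Equiv.prodCongr e e) (fun pr => Iff.rfl)
  have hA2 : 2 * Fintype.card A = n * (n - 1) := by
    rw [hE1]
    exact card_lt_pairs n
  have hcardι : Fintype.card ι = Fintype.card A * 4 := by
    show Fintype.card (A × Bool × Bool) = _
    simp only [Fintype.card_prod, Fintype.card_bool]
  rw [hcardι]
  have hmm : 2 ^ 2 ^ (i + 1) = 2 ^ 2 ^ i * 2 ^ 2 ^ i := by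
    rw [pow_succ, pow_mul, sq]
  set m := 2 ^ 2 ^ i with hm
  rw [hmm]
  have key1 : (m + 2) * m ≤ (2 * n) * (2 * (n - 1)) :=
    Nat.mul_le_mul hcard (by omega)
  have key2 : (2 * n) * (2 * (n - 1)) = 2 * (Fintype.card A * 4) := by
    have : 2 * n * (2 * (n - 1)) = 4 * (n * (n - 1)) := by ring
    rw [this, ← hA2]
    ring
  have key3 : m * m + 2 ≤ (m + 2) * m := by
    have h4 : (m + 2) * m = m * m + 2 * m := by ring
    rw [h4]
    exact Nat.add_le_add_left (by omega) _
  omega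

end Invariant

section Assembly

lemma C_finite (i : ℕ) : (C i).Finite := by
  induction i with
  | zero =>
      show ({gena, genb, gena⁻¹, genb⁻¹} : Set (FreeGroup Bool)).Finite
      exact (Set.finite_singleton _).insert _ |>.insert _ |>.insert _
  | succ i ih =>
      apply Set.Finite.subset (Set.Finite.image2 (fun x y => x * y * x⁻¹ * y⁻¹) ih ih)
      rintro w ⟨x, hx, y, hy, -, -, rfl⟩
      exact Set.mem_image2_of_mem hx hy

lemma genset_inv_mem {g : FreeGroup Bool}
    (hg : g ∈ ({gena, genb, gena⁻¹, genb⁻¹} : Set (FreeGroup Bool))) :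
    g⁻¹ ∈ ({gena, genb, gena⁻¹, genb⁻¹} : Set (FreeGroup Bool)) := by
  rcases hg with rfl | rfl | rfl | rfl
  · exact Or.inr (Or.inr (Or.inl rfl))
  · exact Or.inr (Or.inr (Or.inr rfl))
  · exact Or.inl (by simp)
  · exact Or.inr (Or.inl (by simp))

lemma C_words (i : ℕ) : ∀ w ∈ C i, ∃ L : List (FreeGroup Bool), L.length = 4 ^ i ∧
    (∀ g ∈ L, g ∈ ({gena, genb, gena⁻¹, genb⁻¹} : Set (FreeGroup Bool))) ∧ L.prod = w := by
  induction i with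
  | zero =>
      intro w hw
      exact ⟨[w], rfl, by simpa [C] using hw, by simp⟩
  | succ i ih =>
      rintro w ⟨x, hx, y, hy, -, -, rfl⟩
      obtain ⟨Lx, hLxlen, hLxmem, hLxprod⟩ := ih x hx
      obtain ⟨Ly, hLylen, hLymem, hLyprod⟩ := ih y hy
      refine ⟨Lx ++ Ly ++ (Lx.map (·⁻¹)).reverse ++ (Ly.map (·⁻¹)).reverse, ?_, ?_, ?_⟩
      · simp [hLxlen, hLylen]
        ring
      · intro g hg
        simp only [List.mem_append, List.mem_reverse, List.mem_map] at hg
        rcases hg with ((hg | hg) | ⟨a, ha, rfl⟩) | ⟨a, ha, rfl⟩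
        · exact hLxmem g hg
        · exact hLymem g hg
        · exact genset_inv_mem (hLxmem a ha)
        · exact genset_inv_mem (hLymem a ha)
      · rw [List.prod_append, List.prod_append, List.prod_append]
        rw [← List.prod_inv_reverse, ← List.prod_inv_reverse, hLxprod, hLyprod]

lemma C_card (i : ℕ) : 2 ^ 2 ^ i ≤ (C i).ncard := by
  have h : Invar i := by
    induction i with
    | zero => exact invar_zero
    | succ i ih => exact invar_succ i ih
  obtain ⟨κ, _, _, t, hinj, hmem, hmemi, hcard⟩ := h
  have := count_lemma t hinj (C i) hmem hmemi (C_finite i)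
  omega

end Assembly


/-- Every element of `C i` is a product of exactly `4^i` elements of
`{a, b, a⁻¹, b⁻¹}`, and `|C i| ≥ 2^(2^i)`. -/
theorem C_word_length_and_card (i : ℕ) :
    (∀ w ∈ C i, ∃ f : Fin (4 ^ i) → FreeGroup Bool,
      (∀ j, f j ∈ ({gena, genb, gena⁻¹, genb⁻¹} : Set (FreeGroup Bool))) ∧
      (List.ofFn f).prod = w) ∧
    2 ^ (2 ^ i) ≤ (C i).ncard := by
  constructor
  · intro w hw
    obtain ⟨L, hlen, hmem, hprod⟩ := C_words i w hw
    refine ⟨fun j => L.get (Fin.cast hlen.symm j), ?_, ?_⟩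
    · intro j
      exact hmem _ (by apply List.get_mem)
    · have hofn : List.ofFn (fun j : Fin (4 ^ i) => L.get (Fin.cast hlen.symm j)) = L := by
        apply List.ext_get
        · simp [hlen]
        · intro m h1 h2
          simp [List.get_ofFn]
      rw [hofn, hprod]
  · exact C_card i
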